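/- Let q = 2^n and let σ be the Möbius transformation of P^1(F_q) given by σ(u) = (a^{-1} b u + b)/(u + a + a^{-1} b), where x^2 + a x + b is a primitive irreducible polynomial over F_q with a ≠ 0. Then the matrix M = [[a^{-1}b, b],[1, a + a^{-1}b]] ∈ GL_2(F_q) has image in PGL_2(F_q) of order exactly q + 1. -/

import Mathlib

open Polynomial

lemma center_GL2_scalar {F : Type*} [Field F] (N : GL (Fin 2) F)
    (h : N ∈ Subgroup.center (GL (Fin 2) F)) :
    ∃ c : F, (N : Matrix (Fin 2) (Fin 2) F) = c • 1 := by
  set P : Matrix (Fin 2) (Fin 2) F := (N : Matrix (Fin 2) (Fin 2) F) with hP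
  have hT : (!![1, 1; 0, 1] : Matrix (Fin 2) (Fin 2) F) * !![1, -1; 0, 1] = 1 := by
    simp [Matrix.mul_fin_two, Matrix.one_fin_two]
  have hT' : (!![1, -1; 0, 1] : Matrix (Fin 2) (Fin 2) F) * !![1, 1; 0, 1] = 1 := by
    simp [Matrix.mul_fin_two, Matrix.one_fin_two]
  have hS : (!![1, 0; 1, 1] : Matrix (Fin 2) (Fin 2) F) * !![1, 0; -1, 1] = 1 := by
    simp [Matrix.mul_fin_two, Matrix.one_fin_two]
  have hS' : (!![1, 0; -1, 1] : Matrix (Fin 2) (Fin 2) F) * !![1, 0; 1, 1] = 1 := by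
    simp [Matrix.mul_fin_two, Matrix.one_fin_two]
  let T : GL (Fin 2) F := ⟨!![1,1;0,1], !![1,-1;0,1], hT, hT'⟩
  let S : GL (Fin 2) F := ⟨!![1,0;1,1], !![1,0;-1,1], hS, hS'⟩
  have hTc : !![1,1;0,1] * P = P * !![1,1;0,1] := by
    have := Subgroup.mem_center_iff.mp h T
    exact congrArg Units.val this
  have hSc : !![1,0;1,1] * P = P * !![1,0;1,1] := by
    have := Subgroup.mem_center_iff.mp h S
    exact congrArg Units.val this
  refine ⟨P 0 0, ?_⟩
  have e1 := congrFun (congrFun hTc 0) 0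
  have e2 := congrFun (congrFun hTc 0) 1
  have e3 := congrFun (congrFun hSc 1) 1
  have e4 := congrFun (congrFun hSc 1) 0
  simp [Matrix.mul_apply, Fin.sum_univ_two] at e1 e2 e3 e4
  ext i j
  fin_cases i <;> fin_cases j <;>
    simp [Matrix.smul_apply, Matrix.one_apply] <;>
    first
      | exact e3
      | exact e1
      | linear_combination -e4

lemma mem_range_iff_pow {Fq K : Type*} [Field Fq] [Fintype Fq] [Field K] [Fintype K]
    [Algebra Fq K] {x : K} (hx : x ≠ 0) :
    x ∈ Set.range (algebraMap Fq K) ↔ x ^ (Fintype.card Fq - 1) = 1 := by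
  classical
  have hq1 : 1 < Fintype.card Fq := Fintype.one_lt_card
  constructor
  · rintro ⟨c, rfl⟩
    have hc : c ≠ 0 := fun h => hx (by simp [h])
    rw [← map_pow, FiniteField.pow_card_sub_one_eq_one c hc, map_one]
  · intro hpow
    set q := Fintype.card Fq with hqdef
    set f : K[X] := X ^ (q - 1) - C 1 with hf
    have hdeg : f.natDegree = q - 1 := by rw [hf]; exact natDegree_X_pow_sub_C
    have hfne : f ≠ 0 := by
      intro h
      rw [h, natDegree_zero] at hdeg
      omega
    have hinj : Function.Injective (fun c : Fqˣ => algebraMap Fq K (c : Fq)) := by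
      intro c d hcd
      simpa using Units.ext ((algebraMap Fq K).injective hcd)
    have hsub : Finset.univ.image (fun c : Fqˣ => algebraMap Fq K (c : Fq))
        ⊆ f.roots.toFinset := by
      intro y hy
      simp only [Finset.mem_image] at hy
      obtain ⟨c, -, rfl⟩ := hy
      rw [Multiset.mem_toFinset, mem_roots hfne]
      simp only [IsRoot, hf, eval_sub, eval_pow, eval_X, eval_C]
      rw [← map_pow, FiniteField.pow_card_sub_one_eq_one (c : Fq) c.ne_zero, map_one, sub_self]
    have hcard2 : f.roots.toFinset.card ≤ q - 1 := by
      calc f.roots.toFinset.card ≤ Multiset.card f.roots := f.roots.toFinset_card_le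
        _ ≤ f.natDegree := f.card_roots'
        _ = q - 1 := hdeg
    have hcard1 : (Finset.univ.image (fun c : Fqˣ => algebraMap Fq K (c : Fq))).card = q - 1 := by
      rw [Finset.card_image_of_injective _ hinj, Finset.card_univ, Fintype.card_units]
    have heq := Finset.eq_of_subset_of_card_le hsub (by rw [hcard1]; exact hcard2)
    have hxmem : x ∈ f.roots.toFinset := by
      rw [Multiset.mem_toFinset, mem_roots hfne]
      simp [IsRoot, hf, hpow]
    rw [← heq] at hxmem
    simp only [Finset.mem_image] at hxmem
    obtain ⟨c, -, hc⟩ := hxmem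
    exact ⟨c, hc⟩

set_option maxHeartbeats 2000000 in
/-- Let `q = 2^n` and let `x^2 + a x + b` be a primitive irreducible polynomial over
`F_q` with `a ≠ 0`. Then the matrix `M = [[a⁻¹b, b], [1, a + a⁻¹b]] ∈ GL_2(F_q)`
(which induces the Möbius transformation `u ↦ (a⁻¹ b u + b)/(u + a + a⁻¹ b)`)
has image in `PGL_2(F_q) = GL_2(F_q)/Z` of order exactly `q + 1`. -/
theorem stmt_6 (n : ℕ) (hn : 0 < n) {Fq : Type*} [Field Fq] [Fintype Fq]
    (hq : Fintype.card Fq = 2 ^ n) (a b : Fq) (ha : a ≠ 0)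
    (hirr : Irreducible (X ^ 2 + C a * X + C b))
    (hprim : IsLeast {e : ℕ | 0 < e ∧ (X ^ 2 + C a * X + C b) ∣ X ^ e - 1}
      (Fintype.card Fq ^ 2 - 1))
    (M : GL (Fin 2) Fq)
    (hM : (M : Matrix (Fin 2) (Fin 2) Fq) = !![a⁻¹ * b, b; 1, a + a⁻¹ * b]) :
    orderOf (QuotientGroup.mk M :
      GL (Fin 2) Fq ⧸ Subgroup.center (GL (Fin 2) Fq)) = Fintype.card Fq + 1 := by
  classical
  set q := Fintype.card Fq with hqdef
  have hq2 : 2 ≤ q := Fintype.one_lt_card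
  -- characteristic two
  have h2 : (2 : Fq) = 0 := by
    have h0 : ((q : ℕ) : Fq) = 0 := FiniteField.cast_card_eq_zero Fq
    rw [hq] at h0
    push_cast at h0
    exact pow_eq_zero_iff hn.ne'  |>.mp h0
  set p : Fq[X] := X ^ 2 + C a * X + C b with hp
  -- degree facts
  have hpdeg : p.natDegree = 2 := by
    have : p = C 1 * X ^ 2 + C a * X + C b := by rw [map_one, one_mul]
    rw [this]
    exact natDegree_quadratic one_ne_zero
  have hpmonic : p.Monic := by
    rw [hp, add_assoc]
    apply monic_X_pow_add
    exact lt_of_le_of_lt degree_linear_le (by norm_num)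
  have hpne : p ≠ 0 := hpmonic.ne_zero
  -- b ≠ 0
  have hb : b ≠ 0 := by
    intro hb0
    have hcoeff : p.coeff 0 = 0 := by simp [hp, hb0, coeff_X_pow]
    obtain ⟨g, hg⟩ := X_dvd_iff.mpr hcoeff
    rcases hirr.isUnit_or_isUnit hg with hu | hu
    · exact not_isUnit_X hu
    · have hgne : g ≠ 0 := by
        intro h0
        rw [h0, mul_zero] at hg
        exact hpne hg
      have : p.natDegree = (X : Fq[X]).natDegree + g.natDegree := by
        rw [hg]; exact natDegree_mul (X_ne_zero (R := Fq)) hgne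
      rw [hpdeg, natDegree_X, natDegree_eq_zero_of_isUnit hu] at this
      omega
  -- the field K = Fq[x]/(p)
  haveI : Fact (Irreducible p) := ⟨hirr⟩
  set K := AdjoinRoot p with hK
  haveI : Module.Finite Fq K := Module.Finite.of_basis (AdjoinRoot.powerBasis hpne).basis
  haveI : Finite K := Module.finite_of_finite Fq
  haveI : Fintype K := Fintype.ofFinite K
  have hcardK : Fintype.card K = q ^ 2 := by
    rw [Module.card_fintype (AdjoinRoot.powerBasis hpne).basis, Fintype.card_fin,
      AdjoinRoot.powerBasis_dim, hpdeg]
  set α : K := AdjoinRoot.root p with hα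
  have hαroot : α ^ 2 + algebraMap Fq K a * α + algebraMap Fq K b = 0 := by
    have := AdjoinRoot.aeval_eq (f := p) p
    rw [AdjoinRoot.mk_self] at this
    simp [hp, map_add, map_mul, map_pow] at this
    exact this
  have hαne : α ≠ 0 := by
    intro h0
    rw [h0] at hαroot
    simp only [zero_pow, mul_zero, add_zero, zero_add] at hαroot
    · exact hb ((algebraMap Fq K).injective (by simpa using hαroot))
  -- order of α
  have hpow_iff : ∀ e : ℕ, α ^ e = 1 ↔ p ∣ X ^ e - 1 := by
    intro e
    rw [← AdjoinRoot.mk_eq_zero]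
    have : (AdjoinRoot.mk p) (X ^ e - 1) = α ^ e - 1 := by
      rw [← AdjoinRoot.aeval_eq]
      simp [hα]
    rw [this, sub_eq_zero]
  have hq21 : 0 < q ^ 2 - 1 := by
    have : 2 ≤ q ^ 2 := by nlinarith
    omega
  have hαord : orderOf α = q ^ 2 - 1 := by
    have h1 : α ^ (q ^ 2 - 1) = 1 := (hpow_iff _).mpr hprim.1.2
    have hfin : IsOfFinOrder α := isOfFinOrder_iff_pow_eq_one.mpr ⟨_, hq21, h1⟩
    have hle : q ^ 2 - 1 ≤ orderOf α :=
      hprim.2 ⟨hfin.orderOf_pos, (hpow_iff _).mp (pow_orderOf_eq_one α)⟩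
    exact Nat.le_antisymm (Nat.le_of_dvd (by omega) (orderOf_dvd_of_pow_eq_one h1)) hle
  -- the matrix representation
  set A : Matrix (Fin 2) (Fin 2) Fq := !![0, b; 1, a] with hA
  have hAroot : aeval A p = 0 := by
    rw [hp]
    simp only [map_add, map_mul, map_pow, aeval_X, aeval_C]
    rw [Algebra.algebraMap_eq_smul_one, Algebra.algebraMap_eq_smul_one]
    ext i j
    fin_cases i <;> fin_cases j <;>
      simp [hA, pow_two, Matrix.mul_fin_two, Matrix.one_fin_two, Matrix.smul_apply] <;>
      linear_combination (norm := ring_nf) ?_ <;>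
      first
        | linear_combination b * h2
        | linear_combination a * b * h2
        | linear_combination a * h2
        | linear_combination (b + a^2) * h2
  -- the algebra embedding K -> M_2(Fq)
  have hI : ∀ g ∈ Ideal.span {p}, aeval A g = 0 := by
    intro g hg
    rw [Ideal.mem_span_singleton] at hg
    obtain ⟨r, rfl⟩ := hg
    rw [map_mul, hAroot, zero_mul]
  set φ : K →ₐ[Fq] Matrix (Fin 2) (Fin 2) Fq :=
    Ideal.Quotient.liftₐ (Ideal.span {p}) (Polynomial.aeval A) hI with hφ
  have hφα : φ α = A := by
    show Ideal.Quotient.liftₐ (Ideal.span {p}) (Polynomial.aeval A) hI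
      (Ideal.Quotient.mk (Ideal.span {p}) X) = A
    rw [Ideal.Quotient.liftₐ_apply]
    erw [Ideal.Quotient.lift_mk]
    simp
  have hφinj : Function.Injective φ := φ.toRingHom.injective
  set m : K := algebraMap Fq K a⁻¹ * α ^ 2 with hm
  have hφm : φ m = (M : Matrix (Fin 2) (Fin 2) Fq) := by
    rw [hm, map_mul, map_pow, hφα, AlgHom.commutes, hM, Algebra.algebraMap_eq_smul_one]
    ext i j
    fin_cases i <;> fin_cases j <;>
      simp [hA, pow_two, Matrix.mul_fin_two, Matrix.one_fin_two, Matrix.smul_apply,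
        Matrix.mul_apply, Fin.sum_univ_two] <;>
      field_simp <;> ring
  have hMk : ∀ k : ℕ, ((M ^ k : GL (Fin 2) Fq) : Matrix (Fin 2) (Fin 2) Fq) = φ (m ^ k) := by
    intro k
    rw [Units.val_pow_eq_pow_val, ← hφm, ← map_pow]
  have hrange_mul : ∀ (k : ℕ) (x : K),
      algebraMap Fq K (a⁻¹ ^ k) * x ∈ Set.range (algebraMap Fq K) ↔
        x ∈ Set.range (algebraMap Fq K) := by
    intro k x
    constructor
    · rintro ⟨c, hc⟩
      refine ⟨a ^ k * c, ?_⟩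
      rw [map_mul, hc, ← mul_assoc, ← map_mul,
        show a ^ k * a⁻¹ ^ k = 1 by rw [← mul_pow, mul_inv_cancel₀ ha, one_pow],
        map_one, one_mul]
    · rintro ⟨c, hc⟩
      exact ⟨a⁻¹ ^ k * c, by rw [map_mul, hc]⟩
  have hfact : q ^ 2 - 1 = (q + 1) * (q - 1) := by
    have e3 : q - 1 + 1 = q := by omega
    have : q ^ 2 = (q + 1) * (q - 1) + 1 := by
      nth_rewrite 1 [← e3]
      nth_rewrite 2 [← e3]
      ring
    omega
  have h2q : 2 ∣ q := hq ▸ dvd_pow_self 2 hn.ne'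
  have hodd : Nat.Coprime (q + 1) 2 :=
    Nat.coprime_two_right.mpr (Nat.odd_iff.mpr (by omega))
  -- the key characterization
  have key : ∀ k : ℕ,
      (QuotientGroup.mk M : GL (Fin 2) Fq ⧸ Subgroup.center (GL (Fin 2) Fq)) ^ k = 1 ↔
        (q + 1) ∣ k := by
    intro k
    rw [← QuotientGroup.mk_pow, QuotientGroup.eq_one_iff]
    constructor
    · intro hc
      obtain ⟨c, hc⟩ := center_GL2_scalar _ hc
      rw [hMk k] at hc
      have hmem : m ^ k ∈ Set.range (algebraMap Fq K) := by
        refine ⟨c, hφinj ?_⟩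
        rw [AlgHom.commutes, Algebra.algebraMap_eq_smul_one, hc]
      rw [hm, mul_pow, ← map_pow, ← pow_mul, hrange_mul] at hmem
      rw [mem_range_iff_pow (pow_ne_zero _ hαne), ← pow_mul,
        ← orderOf_dvd_iff_pow_eq_one, hαord, hfact,
        Nat.mul_dvd_mul_iff_right (show 0 < q - 1 by omega)] at hmem
      exact hodd.dvd_of_dvd_mul_left hmem
    · intro hk
      have h1 : (q + 1) ∣ 2 * k := hk.mul_left 2
      have h2' : α ^ (2 * k) ∈ Set.range (algebraMap Fq K) := by
        rw [mem_range_iff_pow (pow_ne_zero _ hαne), ← pow_mul,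
          ← orderOf_dvd_iff_pow_eq_one, hαord, hfact,
          Nat.mul_dvd_mul_iff_right (show 0 < q - 1 by omega)]
        exact h1
      have h3 : m ^ k ∈ Set.range (algebraMap Fq K) := by
        rw [hm, mul_pow, ← map_pow, ← pow_mul, hrange_mul]
        exact h2'
      obtain ⟨c, hc⟩ := h3
      have hscal : ((M ^ k : GL (Fin 2) Fq) : Matrix (Fin 2) (Fin 2) Fq) = c • 1 := by
        rw [hMk, ← hc, AlgHom.commutes, Algebra.algebraMap_eq_smul_one]
      rw [Subgroup.mem_center_iff]
      intro g
      apply Units.ext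
      rw [Units.val_mul, Units.val_mul, hscal, mul_smul_comm, smul_mul_assoc, mul_one, one_mul]
  have hdvd1 : orderOf (QuotientGroup.mk M :
      GL (Fin 2) Fq ⧸ Subgroup.center (GL (Fin 2) Fq)) ∣ q + 1 :=
    orderOf_dvd_of_pow_eq_one ((key (q + 1)).mpr dvd_rfl)
  have hdvd2 : q + 1 ∣ orderOf (QuotientGroup.mk M :
      GL (Fin 2) Fq ⧸ Subgroup.center (GL (Fin 2) Fq)) :=
    (key _).mp (pow_orderOf_eq_one _)
  exact Nat.dvd_antisymm hdvd1 hdvd2
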